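/- Assume the pair (A,B) is reachable. Let μ be a finite positive Borel measure on [0, 2π] and suppose Σ = ∫ (I − e^{iθ}A)⁻¹ B B* ((I − e^{iθ}A)⁻¹)* dμ(θ). Then there exists an n×n complex matrix M with M A = A M such that Σ = (1/2)(M 𝒢 + 𝒢 M*), where 𝒢 = ∑_{k=0}^∞ Aᵏ B B* (A*)ᵏ is the reachability Gramian. -/

import Mathlib

open Matrix MeasureTheory
open scoped ComplexOrder

open scoped NNReal ENNReal

attribute [local instance] Matrix.linftyOpNormedRing Matrix.linftyOpNormedAlgebra
  Matrix.linftyOpNormedAddCommGroup Matrix.linftyOpNormedSpace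

lemma unit_one_sub_smul {n : ℕ} (A : Matrix (Fin n) (Fin n) ℂ)
    (hA : ∀ μ ∈ spectrum ℂ A, ‖μ‖ < 1) (z : ℂ) (hz : ‖z‖ = 1) :
    IsUnit (1 - z • A) := by
  by_contra h
  have hz0 : z ≠ 0 := by
    intro h0; rw [h0] at hz; simp at hz
  have key : (1 - z • A) = algebraMap ℂ _ z * (algebraMap ℂ _ z⁻¹ - A) := by
    rw [mul_sub, ← _root_.map_mul, mul_inv_cancel₀ hz0, _root_.map_one, ← Algebra.smul_def]
  have hmem : z⁻¹ ∈ spectrum ℂ A := by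
    rw [spectrum.mem_iff]
    intro hu
    exact h (key ▸ (((Ne.isUnit hz0).map (algebraMap ℂ (Matrix (Fin n) (Fin n) ℂ))).mul hu))
  have := hA _ hmem
  rw [norm_inv, hz] at this
  norm_num at this

lemma pow_norm_event {n : ℕ} (hn : 1 ≤ n) (A : Matrix (Fin n) (Fin n) ℂ)
    (hA : ∀ μ ∈ spectrum ℂ A, ‖μ‖ < 1) :
    ∃ r : ℝ≥0, r < 1 ∧ ∀ᶠ k : ℕ in Filter.atTop, ‖A ^ k‖₊ ≤ r ^ k := by
  haveI : Nonempty (Fin n) := ⟨⟨0, hn⟩⟩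
  have hρ : spectralRadius ℂ A < 1 := by
    have := spectrum.spectralRadius_lt_of_forall_lt (a := A) (r := 1)
      (fun z hz => by simpa [← NNReal.coe_lt_coe] using hA z hz)
    simpa using this
  obtain ⟨r, hr1, hr2⟩ := exists_between hρ
  have hrtop : r ≠ ⊤ := (hr2.trans_le le_top).ne
  have htend := spectrum.pow_nnnorm_pow_one_div_tendsto_nhds_spectralRadius A
  have hev : ∀ᶠ k : ℕ in Filter.atTop, (‖A ^ k‖₊ : ENNReal) ^ (1 / (k:ℝ)) < r :=
    htend.eventually_lt_const hr1
  refine ⟨r.toNNReal, ?_, ?_⟩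
  · have := hr2
    rwa [← ENNReal.coe_lt_coe, ENNReal.coe_toNNReal hrtop, ENNReal.coe_one]
  · filter_upwards [hev, Filter.eventually_ge_atTop 1] with k hk hk1
    have hk0 : (k : ℝ) ≠ 0 := by positivity
    have : ((‖A ^ k‖₊ : ENNReal) ^ (1 / (k:ℝ))) ^ (k : ℝ) ≤ r ^ (k : ℝ) :=
      ENNReal.rpow_le_rpow hk.le (by positivity)
    rw [← ENNReal.rpow_mul, one_div, inv_mul_cancel₀ hk0, ENNReal.rpow_one] at this
    rw [← ENNReal.coe_le_coe, ENNReal.coe_pow, ENNReal.coe_toNNReal hrtop,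
      ← ENNReal.rpow_natCast r k]
    exact this

lemma spec_conjT {n : ℕ} (A : Matrix (Fin n) (Fin n) ℂ)
    (hA : ∀ μ ∈ spectrum ℂ A, ‖μ‖ < 1) : ∀ μ ∈ spectrum ℂ Aᴴ, ‖μ‖ < 1 := by
  intro μ hμ
  rw [← Matrix.star_eq_conjTranspose, spectrum.map_star] at hμ
  rw [Set.mem_star] at hμ
  simpa using hA _ hμ

lemma summable_pows {n : ℕ} (hn : 1 ≤ n) (A : Matrix (Fin n) (Fin n) ℂ)
    (hA : ∀ μ ∈ spectrum ℂ A, ‖μ‖ < 1) (C : Matrix (Fin n) (Fin n) ℂ) :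
    Summable (fun k : ℕ => A ^ k * C * (Aᴴ) ^ k) := by
  obtain ⟨r1, hr1, he1⟩ := pow_norm_event hn A hA
  obtain ⟨r2, hr2, he2⟩ := pow_norm_event hn Aᴴ (spec_conjT A hA)
  refine Summable.of_norm_bounded_eventually_nat (g := fun k => ‖C‖ * ((r1 : ℝ) * r2) ^ k) ?_ ?_
  · refine Summable.mul_left _ (summable_geometric_of_lt_one (by positivity) ?_)
    have a1 : (r1 : ℝ) < 1 := by exact_mod_cast hr1
    have a2 : (r2 : ℝ) < 1 := by exact_mod_cast hr2
    have b1 : (0:ℝ) ≤ r1 := r1.coe_nonneg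
    have b2 : (0:ℝ) ≤ r2 := r2.coe_nonneg
    nlinarith
  · filter_upwards [he1, he2] with k h1 h2
    calc ‖A ^ k * C * Aᴴ ^ k‖ ≤ ‖A ^ k * C‖ * ‖Aᴴ ^ k‖ := norm_mul_le _ _
    _ ≤ ‖A ^ k‖ * ‖C‖ * ‖Aᴴ ^ k‖ := by
        apply mul_le_mul_of_nonneg_right (norm_mul_le _ _) (norm_nonneg _)
    _ ≤ (r1:ℝ)^k * ‖C‖ * (r2:ℝ)^k := by
        apply mul_le_mul ?_ ?_ (norm_nonneg _) (by positivity)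
        · apply mul_le_mul_of_nonneg_right ?_ (norm_nonneg _)
          exact_mod_cast h1
        · exact_mod_cast h2
    _ = ‖C‖ * ((r1:ℝ) * r2) ^ k := by ring

lemma lyap {n : ℕ} (A C : Matrix (Fin n) (Fin n) ℂ)
    (h : Summable (fun k : ℕ => A ^ k * C * (Aᴴ) ^ k)) :
    C + A * (∑' k : ℕ, A ^ k * C * (Aᴴ) ^ k) * Aᴴ = ∑' k : ℕ, A ^ k * C * (Aᴴ) ^ k := by
  have h2 : A * (∑' k : ℕ, A ^ k * C * (Aᴴ) ^ k) * Aᴴ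
      = ∑' k : ℕ, A * (A ^ k * C * (Aᴴ) ^ k) * Aᴴ := by
    rw [← h.tsum_mul_left, ← (h.mul_left A).tsum_mul_right]
  rw [h2]
  have h3 := (Summable.tsum_eq_zero_add h).symm
  rw [pow_zero, pow_zero, one_mul, mul_one] at h3
  have h4 : ∀ k : ℕ, A * (A ^ k * C * Aᴴ ^ k) * Aᴴ = A ^ (k+1) * C * Aᴴ ^ (k+1) := by
    intro k
    rw [pow_succ', pow_succ]
    noncomm_ring
  simp only [h4]
  exact h3

lemma key_identity {n : ℕ} (A G C : Matrix (Fin n) (Fin n) ℂ)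
    (hG : C + A * G * Aᴴ = G) (z : ℂ) (hz1 : z * (starRingEnd ℂ) z = 1)
    (hu : IsUnit (1 - z • A)) :
    (1 - z • A)⁻¹ * C * ((1 - z • A)⁻¹)ᴴ =
      (1 / 2 : ℂ) • (((1 - z • A)⁻¹ * (1 + z • A)) * G +
        G * ((1 - z • A)⁻¹ * (1 + z • A))ᴴ) := by
  have hz1' : (starRingEnd ℂ) z * z = 1 := by rw [mul_comm]; exact hz1
  have hzs : star z * z = 1 := hz1'
  have hzs' : z * star z = 1 := hz1
  set U : Matrix (Fin n) (Fin n) ℂ := 1 - z • A with hU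
  set V : Matrix (Fin n) (Fin n) ℂ := 1 + z • A with hV
  set R : Matrix (Fin n) (Fin n) ℂ := U⁻¹ with hR
  have hdet : IsUnit U.det := (Matrix.isUnit_iff_isUnit_det U).mp hu
  have h1 : R * U = 1 := Matrix.nonsing_inv_mul U hdet
  have h2 : U * R = 1 := Matrix.mul_nonsing_inv U hdet
  have hAG : A * G * Aᴴ = G - C := eq_sub_of_add_eq' hG
  have key : U * G * Vᴴ + V * G * Uᴴ = (2 : ℂ) • C := by
    simp only [hU, hV, Matrix.conjTranspose_add, Matrix.conjTranspose_sub,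
      Matrix.conjTranspose_one, Matrix.conjTranspose_smul, Matrix.mul_add, Matrix.add_mul,
      Matrix.mul_sub, Matrix.sub_mul, Matrix.mul_one, Matrix.one_mul, Matrix.mul_smul,
      Matrix.smul_mul, smul_smul, hz1, hz1', hzs, hzs', one_smul, hAG]
    match_scalars <;>
      first
        | ring1
        | linear_combination (-2:ℂ) * hzs
        | linear_combination (2:ℂ) * hzs
  have hUR' : Uᴴ * Rᴴ = 1 := by
    rw [← Matrix.conjTranspose_mul, h1, Matrix.conjTranspose_one]
  have hVR' : Vᴴ * Rᴴ = (R * V)ᴴ := (Matrix.conjTranspose_mul R V).symm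
  have e2 : R * (U * G * Vᴴ) * Rᴴ = G * (R * V)ᴴ := by
    calc R * (U * G * Vᴴ) * Rᴴ = (R * U) * (G * (Vᴴ * Rᴴ)) := by noncomm_ring
    _ = G * (R * V)ᴴ := by rw [h1, one_mul, hVR']
  have e3 : R * (V * G * Uᴴ) * Rᴴ = (R * V) * G := by
    calc R * (V * G * Uᴴ) * Rᴴ = (R * V) * (G * (Uᴴ * Rᴴ)) := by noncomm_ring
    _ = (R * V) * G := by rw [hUR', mul_one]
  have e4 : (2 : ℂ) • (R * C * Rᴴ) = (R * V) * G + G * (R * V)ᴴ := by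
    calc (2 : ℂ) • (R * C * Rᴴ) = R * ((2:ℂ) • C) * Rᴴ := by
          rw [Matrix.mul_smul, Matrix.smul_mul]
    _ = R * (U * G * Vᴴ) * Rᴴ + R * (V * G * Uᴴ) * Rᴴ := by
          rw [← key]; simp only [Matrix.mul_add, Matrix.add_mul]
    _ = (R * V) * G + G * (R * V)ᴴ := by rw [e2, e3]; abel
  calc R * C * Rᴴ = (1/2 : ℂ) • ((2:ℂ) • (R * C * Rᴴ)) := by
        rw [smul_smul]; norm_num
  _ = _ := by rw [e4]

lemma commute_RV {n : ℕ} (A : Matrix (Fin n) (Fin n) ℂ) (z : ℂ)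
    (hu : IsUnit (1 - z • A)) :
    ((1 - z • A)⁻¹ * (1 + z • A)) * A = A * ((1 - z • A)⁻¹ * (1 + z • A)) := by
  set U : Matrix (Fin n) (Fin n) ℂ := 1 - z • A with hU
  set V : Matrix (Fin n) (Fin n) ℂ := 1 + z • A with hV
  set R : Matrix (Fin n) (Fin n) ℂ := U⁻¹ with hR
  have hdet : IsUnit U.det := (Matrix.isUnit_iff_isUnit_det U).mp hu
  have h1 : R * U = 1 := Matrix.nonsing_inv_mul U hdet
  have h2 : U * R = 1 := Matrix.mul_nonsing_inv U hdet
  have hc : A * U = U * A := by rw [hU]; noncomm_ring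
  have hc2 : V * A = A * V := by rw [hV]; noncomm_ring
  have hAR : A * R = R * A := by
    have h3 : U * (A * R) = A := by rw [← mul_assoc, ← hc, mul_assoc, h2, mul_one]
    calc A * R = R * U * (A * R) := by rw [h1, one_mul]
    _ = R * (U * (A * R)) := by rw [mul_assoc]
    _ = R * A := by rw [h3]
  calc R * V * A = R * (A * V) := by rw [mul_assoc, hc2]
  _ = (A * R) * V := by rw [← mul_assoc, ← hAR]
  _ = A * (R * V) := by rw [mul_assoc]


/-- If `(A,B)` is reachable and `Σ` is the state covariance of some finite
positive measure `μ` on `[0,2π]`, i.e.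
`Σ = ∫ (I − e^{iθ}A)⁻¹ B B* ((I − e^{iθ}A)⁻¹)* dμ(θ)`, then `Σ = ½(M 𝒢 + 𝒢 M*)` for some
matrix `M` commuting with `A`, where `𝒢` is the reachability Gramian. -/
theorem state_covariance_structure
    {n : ℕ} (hn : 1 ≤ n)
    (A : Matrix (Fin n) (Fin n) ℂ) (B : Matrix (Fin n) (Fin 1) ℂ)
    (hA : ∀ μ ∈ spectrum ℂ A, ‖μ‖ < 1)
    (hreach : IsUnit (Matrix.of fun (i : Fin n) (j : Fin n) => (A ^ (j : ℕ) * B) i 0))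
    (μ : Measure ℝ) [IsFiniteMeasure μ]
    (S : Matrix (Fin n) (Fin n) ℂ)
    (hS : S = Matrix.of fun i j =>
      ∫ θ in Set.Icc (0:ℝ) (2 * Real.pi),
        (((1 - Complex.exp (θ * Complex.I) • A)⁻¹ * B * Bᴴ *
          ((1 - Complex.exp (θ * Complex.I) • A)⁻¹)ᴴ :
          Matrix (Fin n) (Fin n) ℂ) i j) ∂μ) :
    ∃ M : Matrix (Fin n) (Fin n) ℂ, M * A = A * M ∧
      S = (1 / 2 : ℂ) • (M * (∑' k : ℕ, A ^ k * B * Bᴴ * (Aᴴ) ^ k) +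
        (∑' k : ℕ, A ^ k * B * Bᴴ * (Aᴴ) ^ k) * Mᴴ) := by
  classical
  haveI : Nonempty (Fin n) := ⟨⟨0, hn⟩⟩
  set z : ℝ → ℂ := fun θ => Complex.exp (θ * Complex.I) with hzdef
  have hznorm : ∀ θ : ℝ, ‖z θ‖ = 1 := fun θ => by
    simp [hzdef, Complex.norm_exp_ofReal_mul_I]
  have hzu : ∀ θ : ℝ, IsUnit (1 - z θ • A) := fun θ => unit_one_sub_smul A hA _ (hznorm θ)
  have hz1 : ∀ θ : ℝ, z θ * (starRingEnd ℂ) (z θ) = 1 := fun θ => by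
    rw [hzdef]
    rw [← Complex.exp_conj, ← Complex.exp_add]
    simp
  set C : Matrix (Fin n) (Fin n) ℂ := B * Bᴴ with hCdef
  have hsum : Summable (fun k : ℕ => A ^ k * C * (Aᴴ) ^ k) := summable_pows hn A hA C
  set G : Matrix (Fin n) (Fin n) ℂ := ∑' k : ℕ, A ^ k * C * (Aᴴ) ^ k with hGdef
  have hG : C + A * G * Aᴴ = G := lyap A C hsum
  -- continuity
  have hzc : Continuous z := by
    exact Complex.continuous_exp.comp ((Complex.continuous_ofReal).mul continuous_const)
  have hUc : Continuous (fun θ : ℝ => 1 - z θ • A) :=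
    continuous_const.sub (hzc.smul continuous_const)
  have hRc : Continuous (fun θ : ℝ => (1 - z θ • A)⁻¹) := by
    rw [continuous_iff_continuousAt]
    intro θ
    refine ContinuousAt.comp (continuousAt_matrix_inv _ ?_) hUc.continuousAt
    have hdet : IsUnit (1 - z θ • A).det := (Matrix.isUnit_iff_isUnit_det _).mp (hzu θ)
    simpa [Ring.inverse_eq_inv'] using
      (continuousAt_inv₀ hdet.ne_zero)
  set F : ℝ → Matrix (Fin n) (Fin n) ℂ := fun θ => (1 - z θ • A)⁻¹ * (1 + z θ • A) with hFdef
  have hVc : Continuous (fun θ : ℝ => 1 + z θ • A) :=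
    continuous_const.add (hzc.smul continuous_const)
  have hFc : Continuous F := hRc.matrix_mul hVc
  set g : ℝ → Matrix (Fin n) (Fin n) ℂ :=
    fun θ => (1 - z θ • A)⁻¹ * B * Bᴴ * ((1 - z θ • A)⁻¹)ᴴ with hgdef
  have hgc : Continuous g :=
    ((hRc.matrix_mul continuous_const).matrix_mul continuous_const).matrix_mul
      hRc.matrix_conjTranspose
  set I2 : Set ℝ := Set.Icc (0:ℝ) (2 * Real.pi) with hI2
  set M : Matrix (Fin n) (Fin n) ℂ := ∫ θ in I2, F θ ∂μ with hMdef
  -- entry CLM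
  let E : Fin n → Fin n → (Matrix (Fin n) (Fin n) ℂ →L[ℂ] ℂ) := fun i j =>
    LinearMap.toContinuousLinearMap
      { toFun := fun X => X i j
        map_add' := fun _ _ => rfl
        map_smul' := fun _ _ => rfl }
  have hE : ∀ (i j) (X : Matrix (Fin n) (Fin n) ℂ), E i j X = X i j := fun _ _ _ => rfl
  have hMentry : ∀ i j, M i j = ∫ θ in I2, F θ i j ∂μ := by
    intro i j
    rw [hMdef]
    exact (ContinuousLinearMap.integral_comp_comm (E i j) hFc.integrableOn_Icc).symm
  -- S = ∫ g
  have hSint : S = ∫ θ in I2, g θ ∂μ := by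
    ext i j
    rw [hS]
    show (∫ θ in I2, g θ i j ∂μ) = (∫ θ in I2, g θ ∂μ) i j
    exact (ContinuousLinearMap.integral_comp_comm (E i j) hgc.integrableOn_Icc)
  -- pointwise identity
  have hpt : ∀ θ : ℝ, g θ = (1/2 : ℂ) • (F θ * G + G * (F θ)ᴴ) := by
    intro θ
    have := key_identity A G C hG (z θ) (hz1 θ) (hzu θ)
    rw [hgdef]
    simp only
    rw [Matrix.mul_assoc ((1 - z θ • A)⁻¹) B Bᴴ]
    exact this
  -- conjTranspose of M
  have hMH : Mᴴ = ∫ θ in I2, (F θ)ᴴ ∂μ := by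
    ext i j
    rw [Matrix.conjTranspose_apply, hMentry j i]
    rw [RCLike.star_def, ← integral_conj]
    have h2 := (ContinuousLinearMap.integral_comp_comm (E i j)
      ((hFc.matrix_conjTranspose : Continuous fun θ => (F θ)ᴴ).integrableOn_Icc
        (a := 0) (b := 2 * Real.pi) (μ := μ)))
    exact h2
  -- commutation
  have hMA : M * A = A * M := by
    let L1 : Matrix (Fin n) (Fin n) ℂ →L[ℂ] Matrix (Fin n) (Fin n) ℂ :=
      LinearMap.toContinuousLinearMap (LinearMap.mulRight ℂ A)
    let L2 : Matrix (Fin n) (Fin n) ℂ →L[ℂ] Matrix (Fin n) (Fin n) ℂ :=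
      LinearMap.toContinuousLinearMap (LinearMap.mulLeft ℂ A)
    have e1 : M * A = L1 M := rfl
    have e2 : A * M = L2 M := rfl
    rw [e1, e2, hMdef]
    refine (ContinuousLinearMap.integral_comp_comm L1 hFc.integrableOn_Icc).symm.trans
      (Eq.trans ?_ (ContinuousLinearMap.integral_comp_comm L2 hFc.integrableOn_Icc))
    congr 1
    ext θ : 1
    show F θ * A = A * F θ
    exact commute_RV A (z θ) (hzu θ)
  refine ⟨M, hMA, ?_⟩
  have htsum : (∑' k : ℕ, A ^ k * B * Bᴴ * (Aᴴ) ^ k) = G := by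
    rw [hGdef]
    congr 1
    ext k
    rw [hCdef, ← Matrix.mul_assoc]
  rw [htsum]
  have hFG := (hFc.matrix_mul continuous_const : Continuous fun θ => F θ * G).integrableOn_Icc
    (a := 0) (b := 2 * Real.pi) (μ := μ)
  have hGFH := (continuous_const.matrix_mul hFc.matrix_conjTranspose :
    Continuous fun θ => G * (F θ)ᴴ).integrableOn_Icc (a := 0) (b := 2 * Real.pi) (μ := μ)
  have hMG : M * G = ∫ θ in I2, F θ * G ∂μ := by
    let L : Matrix (Fin n) (Fin n) ℂ →L[ℂ] Matrix (Fin n) (Fin n) ℂ :=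
      LinearMap.toContinuousLinearMap (LinearMap.mulRight ℂ G)
    have e : M * G = L M := rfl
    rw [e, hMdef]
    exact (ContinuousLinearMap.integral_comp_comm L hFc.integrableOn_Icc).symm
  have hGM : G * Mᴴ = ∫ θ in I2, G * (F θ)ᴴ ∂μ := by
    let L : Matrix (Fin n) (Fin n) ℂ →L[ℂ] Matrix (Fin n) (Fin n) ℂ :=
      LinearMap.toContinuousLinearMap (LinearMap.mulLeft ℂ G)
    have e : G * Mᴴ = L Mᴴ := rfl
    rw [e, hMH]
    exact (ContinuousLinearMap.integral_comp_comm L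
      ((hFc.matrix_conjTranspose : Continuous fun θ => (F θ)ᴴ).integrableOn_Icc
        (a := 0) (b := 2 * Real.pi) (μ := μ))).symm
  rw [hSint]
  calc ∫ θ in I2, g θ ∂μ = ∫ θ in I2, (1/2:ℂ) • (F θ * G + G * (F θ)ᴴ) ∂μ :=
        MeasureTheory.integral_congr_ae (Filter.Eventually.of_forall fun θ => hpt θ)
  _ = (1/2:ℂ) • ((∫ θ in I2, F θ * G ∂μ) + (∫ θ in I2, G * (F θ)ᴴ ∂μ)) := by
        rw [MeasureTheory.integral_smul, MeasureTheory.integral_add hFG hGFH]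
  _ = _ := by rw [← hMG, ← hGM]
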